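/- Let P ∈ ℝ[x] have degree n, let J be an interval of length |J|, and suppose |P(x)| ≤ M for all x ∈ J. Then for each 0 ≤ i ≤ n and each x₀ ∈ J, the i-th derivative satisfies |P^{(i)}(x₀)| ≤ C(n) · M / |J|^i for a constant C(n) depending only on n. -/

import Mathlib

open Polynomial Finset

private lemma abs_eval_le_unit (q : Polynomial ℝ) (x : ℝ) (h0 : 0 ≤ x) (h1 : x ≤ 1) :
    |q.eval x| ≤ ∑ k ∈ Finset.range (q.natDegree + 1), |q.coeff k| := by
  rw [Polynomial.eval_eq_sum_range]
  refine (Finset.abs_sum_le_sum_abs _ _).trans (Finset.sum_le_sum ?_)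
  intro k _
  rw [abs_mul]
  calc |q.coeff k| * |x ^ k| ≤ |q.coeff k| * 1 := by
        refine mul_le_mul_of_nonneg_left ?_ (abs_nonneg _)
        rw [abs_pow]
        exact pow_le_one₀ (abs_nonneg x) (abs_le.mpr ⟨by linarith, h1⟩)
    _ = _ := mul_one _

private lemma iter_deriv_comp_linear (p : Polynomial ℝ) (c d : ℝ) (i : ℕ) :
    (Polynomial.derivative^[i]) (p.comp (C c * X + C d)) =
      C (c ^ i) * (((Polynomial.derivative^[i]) p).comp (C c * X + C d)) := by
  induction i with
  | zero => simp
  | succ i ih =>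
    rw [Function.iterate_succ_apply', ih, Polynomial.derivative_C_mul,
      Polynomial.derivative_comp, Function.iterate_succ_apply']
    have h2 : Polynomial.derivative (C c * X + C d) = C c := by simp
    rw [h2, pow_succ, Polynomial.C_mul]
    ring

private lemma unit_case (n : ℕ) : ∃ C : ℝ, 0 < C ∧ ∀ (P : Polynomial ℝ), P.natDegree ≤ n →
    ∀ M : ℝ, (∀ x ∈ Set.Icc (0:ℝ) 1, |P.eval x| ≤ M) →
    ∀ i ≤ n, ∀ x₀ ∈ Set.Icc (0:ℝ) 1, |((Polynomial.derivative^[i]) P).eval x₀| ≤ C * M := by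
  classical
  set s : Finset ℕ := Finset.range (n + 1) with hs
  set v : ℕ → ℝ := fun j => (j : ℝ) / (n + 1) with hv
  have hvs : Set.InjOn v s := by
    intro j _ k _ h
    have hne : ((n : ℝ) + 1) ≠ 0 := by positivity
    have : (j : ℝ) = k := by
      have h' : (j : ℝ) / (n + 1) = k / (n + 1) := h
      exact (div_left_inj' hne).mp h'
    exact_mod_cast this
  set B : ℕ → ℕ → ℝ := fun j i =>
    ∑ k ∈ Finset.range (((Polynomial.derivative^[i]) (Lagrange.basis s v j)).natDegree + 1),
      |((Polynomial.derivative^[i]) (Lagrange.basis s v j)).coeff k| with hB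
  have hBnonneg : ∀ j i, 0 ≤ B j i := fun j i =>
    Finset.sum_nonneg fun k _ => abs_nonneg _
  set S : ℝ := ∑ j ∈ s, ∑ i ∈ Finset.range (n + 1), B j i with hS
  have hSnonneg : 0 ≤ S :=
    Finset.sum_nonneg fun j _ => Finset.sum_nonneg fun i _ => hBnonneg j i
  refine ⟨1 + S, by linarith, ?_⟩
  intro P hPn M hM i hi x₀ hx₀
  have hM0 : 0 ≤ M := (abs_nonneg _).trans (hM 0 ⟨le_refl 0, by norm_num⟩)
  -- P equals its interpolation
  have hdeg : P.degree < (#s : WithBot ℕ) := by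
    have h1 : P.degree ≤ (n : WithBot ℕ) := Polynomial.degree_le_natDegree.trans (by exact_mod_cast hPn)
    refine h1.trans_lt ?_
    rw [hs, Finset.card_range]
    exact_mod_cast Nat.lt_succ_self n
  have hPeq : P = ∑ j ∈ s, C (P.eval (v j)) * Lagrange.basis s v j := by
    conv_lhs => rw [Lagrange.eq_interpolate hvs hdeg, Lagrange.interpolate_apply]
  have hvmem : ∀ j ∈ s, v j ∈ Set.Icc (0:ℝ) 1 := by
    intro j hj
    rw [hs, Finset.mem_range] at hj
    constructor
    · positivity
    · rw [hv]
      rw [div_le_one (by positivity)]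
      have : (j : ℝ) ≤ n := by exact_mod_cast Nat.lt_succ_iff.mp hj
      linarith
  have key : ((Polynomial.derivative^[i]) P).eval x₀ =
      ∑ j ∈ s, P.eval (v j) * (((Polynomial.derivative^[i]) (Lagrange.basis s v j)).eval x₀) := by
    conv_lhs => rw [hPeq]
    rw [Polynomial.iterate_derivative_sum]
    rw [Polynomial.eval_finset_sum]
    refine Finset.sum_congr rfl fun j _ => ?_
    rw [Polynomial.iterate_derivative_C_mul, Polynomial.eval_C_mul]
  rw [key]
  calc |∑ j ∈ s, P.eval (v j) * (((Polynomial.derivative^[i]) (Lagrange.basis s v j)).eval x₀)|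
      ≤ ∑ j ∈ s, |P.eval (v j)| * |((Polynomial.derivative^[i]) (Lagrange.basis s v j)).eval x₀| := by
        refine (Finset.abs_sum_le_sum_abs _ _).trans ?_
        refine Finset.sum_le_sum fun j _ => ?_
        rw [abs_mul]
    _ ≤ ∑ j ∈ s, M * B j i := by
        refine Finset.sum_le_sum fun j hj => ?_
        refine mul_le_mul (hM _ (hvmem j hj))
          (abs_eval_le_unit _ _ hx₀.1 hx₀.2) (abs_nonneg _) hM0
    _ = M * ∑ j ∈ s, B j i := by rw [Finset.mul_sum]
    _ ≤ M * S := by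
        refine mul_le_mul_of_nonneg_left ?_ hM0
        refine Finset.sum_le_sum fun j _ => ?_
        exact Finset.single_le_sum (f := fun i' => B j i') (fun i' _ => hBnonneg j i')
          (Finset.mem_range.mpr (Nat.lt_succ_of_le hi))
    _ ≤ (1 + S) * M := by nlinarith

/-- a Markov/Remez-type inequality: if `|P| ≤ M` on an interval `[a,b]`,
then all derivatives of `P` on `[a,b]` satisfy `|P^{(i)}(x₀)| ≤ C(n) M / (b-a)^i`. -/
theorem stmt_5 (n : ℕ) :
    ∃ C : ℝ, 0 < C ∧ ∀ (P : Polynomial ℝ) (M a b : ℝ), P.natDegree = n → a < b →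
      (∀ x ∈ Set.Icc a b, |P.eval x| ≤ M) →
      ∀ i ≤ n, ∀ x₀ ∈ Set.Icc a b,
        |((Polynomial.derivative^[i]) P).eval x₀| ≤ C * M / (b - a) ^ i := by
  obtain ⟨K, hK, hK2⟩ := unit_case n
  refine ⟨K, hK, ?_⟩
  intro P M a b hPn hab hM i hi x₀ hx₀
  set c : ℝ := b - a with hc
  have hcpos : 0 < c := by simp [hc]; linarith
  set Q : Polynomial ℝ := P.comp (Polynomial.C c * X + Polynomial.C a) with hQ
  have hQeval : ∀ t : ℝ, Q.eval t = P.eval (c * t + a) := by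
    intro t; simp [hQ]
  have hQdeg : Q.natDegree ≤ n := by
    rw [hQ, Polynomial.natDegree_comp, Polynomial.natDegree_linear hcpos.ne', hPn, mul_one]
  have hQbound : ∀ t ∈ Set.Icc (0:ℝ) 1, |Q.eval t| ≤ M := by
    intro t ht
    rw [hQeval]
    refine hM _ ⟨?_, ?_⟩
    · nlinarith [ht.1]
    · nlinarith [ht.2]
  set t₀ : ℝ := (x₀ - a) / c with ht₀
  have ht₀mem : t₀ ∈ Set.Icc (0:ℝ) 1 := by
    constructor
    · apply div_nonneg _ hcpos.le; linarith [hx₀.1]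
    · rw [div_le_one hcpos]; simp [hc]; linarith [hx₀.2]
  have hx₀eq : c * t₀ + a = x₀ := by
    rw [ht₀, mul_div_assoc', mul_comm c, mul_div_assoc, div_self hcpos.ne', mul_one]; ring
  have := hK2 Q hQdeg M hQbound i hi t₀ ht₀mem
  rw [hQ, iter_deriv_comp_linear] at this
  rw [Polynomial.eval_mul, Polynomial.eval_C, Polynomial.eval_comp] at this
  have heval : Polynomial.eval t₀ (Polynomial.C c * Polynomial.X + Polynomial.C a) = c * t₀ + a := by
    simp
  rw [heval, hx₀eq, abs_mul, abs_pow, abs_of_pos hcpos] at this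
  rw [le_div_iff₀ (pow_pos hcpos i)]
  calc |((Polynomial.derivative^[i]) P).eval x₀| * c ^ i
      = c ^ i * |((Polynomial.derivative^[i]) P).eval x₀| := mul_comm _ _
    _ ≤ K * M := this
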